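/- Let ρ_i (i = 1,…,n) be risk measures induced by families of downsets {𝓐_x^{(i)}}_{x∈ℝ}, i.e., ρ_i(X) = inf{x ∈ ℝ : {X > x} ∈ 𝓐_x^{(i)}}, and assume each ρ_i takes values in [−∞,∞). Define 𝓐̃_x = ⋃_{y₁+⋯+y_n = x} { A₁ ∪ ⋯ ∪ A_n : A_i ∈ 𝓐^{(i)}_{y_i} }. Then the inf-convolution satisfies: inf{ Σ_{i=1}^n ρ_i(X_i) : X₁ + ⋯ + X_n = X } = inf{ x ∈ ℝ : {X > x} ∈ 𝓐̃_x }. -/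

import Mathlib

open Set

/-- The risk measure induced by a family of downsets `𝓐_x`:
`ρ(X) = inf {x ∈ ℝ : {X > x} ∈ 𝓐_x}`, valued in the extended reals. -/
noncomputable def indRM {Ω : Type*} (𝓐 : ℝ → Set (Set Ω)) (X : Ω → ℝ) : EReal :=
  sInf ((fun x : ℝ => (x : EReal)) '' {x : ℝ | {ω | x < X ω} ∈ 𝓐 x})

namespace Stmt16Aux

lemma coe_sum {n : ℕ} (y : Fin n → ℝ) :
    ((∑ i, y i : ℝ) : EReal) = ∑ i, ((y i : ℝ) : EReal) :=
  map_sum (⟨⟨(fun x : ℝ => (x : EReal)), EReal.coe_zero⟩, EReal.coe_add⟩ : ℝ →+ EReal) y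
    Finset.univ

lemma exists_reals {n : ℕ} (hn : 0 < n) (s : Fin n → EReal) (hs : ∀ i, s i ≠ ⊤) (r : ℝ)
    (h : ∑ i, s i < (r : EReal)) :
    ∃ c : Fin n → ℝ, (∀ i, s i < ((c i : ℝ) : EReal)) ∧ ∑ i, c i ≤ r := by
  classical
  by_cases hb : ∀ i, s i ≠ ⊥
  · have hrep : ∀ i, s i = (((s i).toReal : ℝ) : EReal) := fun i =>
      (EReal.coe_toReal (hs i) (hb i)).symm
    set u : Fin n → ℝ := fun i => (s i).toReal with hu
    have hsum : (∑ i, s i) = ((∑ i, u i : ℝ) : EReal) := by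
      rw [coe_sum]; exact Finset.sum_congr rfl fun i _ => hrep i
    have hur : ∑ i, u i < r := by
      rw [hsum] at h; exact_mod_cast h
    have hnR : (0 : ℝ) < (n : ℝ) := by exact_mod_cast hn
    refine ⟨fun i => u i + (r - ∑ i, u i) / n, fun i => ?_, ?_⟩
    · rw [hrep i]
      exact_mod_cast lt_add_of_pos_right _ (div_pos (by linarith) hnR)
    · rw [Finset.sum_add_distrib, Finset.sum_const, Finset.card_univ, Fintype.card_fin,
        nsmul_eq_mul, mul_div_cancel₀ _ (ne_of_gt hnR)]
      linarith
  · push_neg at hb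
    obtain ⟨j, hj⟩ := hb
    set d : Fin n → ℝ := fun i => if s i = ⊥ then 0 else (s i).toReal + 1 with hd
    have hsd : ∀ i, s i < ((d i : ℝ) : EReal) := by
      intro i
      by_cases h' : s i = ⊥
      · simp only [hd, h', if_true]
        exact bot_lt_iff_ne_bot.mpr (EReal.coe_ne_bot _)
      · have hrep : s i = (((s i).toReal : ℝ) : EReal) := (EReal.coe_toReal (hs i) h').symm
        rw [hrep]
        simp only [hd, h', if_false]
        exact_mod_cast lt_add_one _
    set M : ℝ := ∑ i, d i with hM
    refine ⟨fun i => d i - (if i = j then max (M - r) 0 else 0), fun i => ?_, ?_⟩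
    · by_cases h' : i = j
      · subst h'
        rw [hj]
        exact bot_lt_iff_ne_bot.mpr (EReal.coe_ne_bot _)
      · simpa [h'] using hsd i
    · rw [Finset.sum_sub_distrib]
      rw [Finset.sum_ite_eq' Finset.univ j (fun _ => max (M - r) 0)]
      simp only [Finset.mem_univ, if_true, ← hM]
      rcases le_or_gt M r with h1 | h1
      · have : max (M - r) 0 = 0 := max_eq_right (by linarith)
        rw [this]; linarith
      · have : max (M - r) 0 = M - r := max_eq_left (by linarith)
        rw [this]; linarith

lemma sum_ne_top' {n : ℕ} (s : Fin n → EReal) (hs : ∀ i, s i ≠ ⊤) :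
    (∑ i, s i) ≠ ⊤ := by
  classical
  induction (Finset.univ : Finset (Fin n)) using Finset.induction_on with
  | empty => simp
  | insert _ _ hx ih =>
    rw [Finset.sum_insert hx]
    exact (EReal.add_lt_top (hs _) ih).ne

end Stmt16Aux

open Stmt16Aux in
/-- Inf-convolution of risk measures induced by families of downsets: it equals the
risk measure induced by the family `𝓐̃_x = ⋃_{y₁+⋯+yₙ=x} {A₁ ∪ ⋯ ∪ Aₙ : Aᵢ ∈ 𝓐^{(i)}_{yᵢ}}`. -/
theorem stmt_16 {Ω : Type*} (n : ℕ) (hn : 0 < n) (𝓐 : Fin n → ℝ → Set (Set Ω))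
    (hdown : ∀ i (x : ℝ), ∅ ∈ 𝓐 i x ∧ ∀ A B : Set Ω, B ∈ 𝓐 i x → A ⊆ B → A ∈ 𝓐 i x)
    (hfin : ∀ i (X : Ω → ℝ), indRM (𝓐 i) X ≠ ⊤)
    (X : Ω → ℝ) :
    let Atilde : ℝ → Set (Set Ω) := fun x =>
      {S : Set Ω | ∃ y : Fin n → ℝ, (∑ i, y i) = x ∧
        ∃ A : Fin n → Set Ω, (∀ i, A i ∈ 𝓐 i (y i)) ∧ S = ⋃ i, A i}
    sInf {s : EReal | ∃ X' : Fin n → Ω → ℝ,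
        (∀ ω, ∑ i, X' i ω = X ω) ∧ s = ∑ i, indRM (𝓐 i) (X' i)} =
      sInf ((fun x : ℝ => (x : EReal)) '' {x : ℝ | {ω | x < X ω} ∈ Atilde x}) := by
  intro Atilde
  classical
  haveI : Nonempty (Fin n) := ⟨⟨0, hn⟩⟩
  apply le_antisymm
  · -- LHS ≤ RHS
    apply le_sInf
    rintro s ⟨x, hx, rfl⟩
    obtain ⟨y, hy, A, hA, hS⟩ := hx
    have hcover : ∀ ω, x < X ω → ∃ i, ω ∈ A i := by
      intro ω h
      have : ω ∈ ⋃ i, A i := by rw [← hS]; exact h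
      exact mem_iUnion.mp this
    set i₀ : Ω → Fin n := fun ω => if h : x < X ω then (hcover ω h).choose else ⟨0, hn⟩ with hi₀
    set X' : Fin n → Ω → ℝ := fun i ω => y i + (if i = i₀ ω then X ω - x else 0) with hX'
    have hsum : ∀ ω, ∑ i, X' i ω = X ω := by
      intro ω
      simp only [hX']
      rw [Finset.sum_add_distrib, Finset.sum_ite_eq' Finset.univ (i₀ ω) (fun _ => X ω - x)]
      simp [hy]
    have hbound : ∀ i, indRM (𝓐 i) (X' i) ≤ ((y i : ℝ) : EReal) := by
      intro i
      apply sInf_le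
      refine ⟨y i, ?_, rfl⟩
      show {ω | y i < X' i ω} ∈ 𝓐 i (y i)
      refine (hdown i (y i)).2 _ (A i) (hA i) ?_
      intro ω hω
      simp only [mem_setOf_eq, hX'] at hω
      by_cases h : i = i₀ ω
      · rw [h, if_pos rfl] at hω
        have hxω : x < X ω := by by_contra hc; rw [hi₀] at hω; simp at hω; linarith
        have : i₀ ω = (hcover ω hxω).choose := by rw [hi₀]; simp [hxω]
        rw [h, this]
        exact (hcover ω hxω).choose_spec
      · rw [if_neg h] at hω; linarith
    calc sInf {s : EReal | ∃ X' : Fin n → Ω → ℝ,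
        (∀ ω, ∑ i, X' i ω = X ω) ∧ s = ∑ i, indRM (𝓐 i) (X' i)}
        ≤ ∑ i, indRM (𝓐 i) (X' i) := sInf_le ⟨X', hsum, rfl⟩
      _ ≤ ∑ i, ((y i : ℝ) : EReal) := Finset.sum_le_sum (fun i _ => hbound i)
      _ = ((x : ℝ) : EReal) := by rw [← coe_sum, hy]
  · -- RHS ≤ LHS
    apply le_sInf
    rintro s ⟨X', hX', rfl⟩
    by_contra hcon
    push_neg at hcon
    obtain ⟨r, hr1, hr2⟩ := EReal.exists_between_coe_real hcon
    obtain ⟨c, hc1, hc2⟩ := exists_reals hn _ (fun i => hfin i (X' i)) r hr1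
    have hy : ∀ i, ∃ yi : ℝ, {ω | yi < X' i ω} ∈ 𝓐 i yi ∧ yi < c i := by
      intro i
      have h1 := hc1 i
      rw [indRM] at h1
      obtain ⟨e, he, hlt⟩ := sInf_lt_iff.mp h1
      obtain ⟨yi, hyi, rfl⟩ := he
      exact ⟨yi, hyi, by exact_mod_cast show ((yi : ℝ) : EReal) < ((c i : ℝ) : EReal) from hlt⟩
    choose y hy1 hy2 using hy
    set t0 : ℝ := ∑ i, y i with ht0def
    have ht0 : t0 ≤ r :=
      le_of_lt (lt_of_lt_of_le
        (Finset.sum_lt_sum_of_nonempty Finset.univ_nonempty (fun i _ => hy2 i)) hc2)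
    have hmem : {ω | t0 < X ω} ∈ Atilde t0 := by
      refine ⟨y, rfl, fun i => {ω | y i < X' i ω} ∩ {ω | t0 < X ω},
        fun i => (hdown i (y i)).2 _ _ (hy1 i) inter_subset_left, ?_⟩
      ext ω
      constructor
      · intro hω
        have hlt : ∑ i, y i < ∑ i, X' i ω := by rw [hX' ω]; exact hω
        obtain ⟨i, -, hi⟩ := Finset.exists_lt_of_sum_lt hlt
        exact mem_iUnion.mpr ⟨i, hi, hω⟩
      · intro hω
        obtain ⟨i, hi⟩ := mem_iUnion.mp hω
        exact hi.2
    have hle : sInf ((fun x : ℝ => (x : EReal)) '' {x : ℝ | {ω | x < X ω} ∈ Atilde x})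
        ≤ ((t0 : ℝ) : EReal) := sInf_le ⟨t0, hmem, rfl⟩
    have : sInf ((fun x : ℝ => (x : EReal)) '' {x : ℝ | {ω | x < X ω} ∈ Atilde x})
        ≤ ((r : ℝ) : EReal) := le_trans hle (by exact_mod_cast ht0)
    exact absurd (lt_of_le_of_lt this hr2) (lt_irrefl _)
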